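/- Let n be odd. Then Σ_{i=0}^{n} |K_i((n-1)/2, n)| = 2^{(n+1)/2}. -/

import Mathlib

open Finset

section Aux

open Polynomial

lemma coeff_one_sub_X_pow (m i : ℕ) : ((1 - X : ℤ[X])^m).coeff i = (-1)^i * m.choose i := by
  have h : (1 - X : ℤ[X])^m = ∑ k ∈ range (m+1), C ((-1)^k * (m.choose k : ℤ)) * X^k := by
    rw [sub_eq_add_neg, add_comm, add_pow]
    apply Finset.sum_congr rfl
    intro k _
    rw [neg_pow]
    simp only [map_mul, map_pow, map_neg, map_one, map_natCast]
    ring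
  rw [h, finset_sum_coeff]
  simp only [coeff_C_mul, coeff_X_pow, mul_ite, mul_one, mul_zero]
  rw [Finset.sum_ite_eq (range (m+1)) i]
  by_cases hi : i ∈ range (m+1)
  · simp [hi]
  · simp only [hi, if_false]
    rw [Nat.choose_eq_zero_of_lt (by simpa using hi)]
    simp

lemma coeff_one_sub_X_sq_pow (m i : ℕ) :
    ((1 - X^2 : ℤ[X])^m).coeff i = if 2 ∣ i then ((-1:ℤ))^(i/2) * (m.choose (i/2) : ℤ) else 0 := by
  have h : (1 - X^2 : ℤ[X])^m = expand ℤ 2 ((1 - X)^m) := by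
    rw [map_pow, map_sub, map_one, expand_X]
  rw [h, coeff_expand (by norm_num)]
  split_ifs with h2 <;> simp [coeff_one_sub_X_pow]

end Aux

def K (i k n : ℕ) : ℤ :=
  ∑ j ∈ Finset.range (i + 1), (-1) ^ j * (Nat.choose k j) * (Nat.choose (n - k) (i - j))

lemma K_val (m i : ℕ) : K i m (2*m+1) = (-1)^(i/2) * m.choose (i/2) := by
  open Polynomial in
  have hp : ((1 - X : ℤ[X])^m * (1 + X)^(m+1)).coeff i = K i m (2*m+1) := by
    rw [coeff_mul, Finset.Nat.sum_antidiagonal_eq_sum_range_succ_mk]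
    unfold K
    apply Finset.sum_congr rfl
    intro j _
    rw [coeff_one_sub_X_pow, coeff_one_add_X_pow]
    have : 2*m+1-m = m+1 := by omega
    rw [this]
  open Polynomial in
  rw [← hp]
  have hq : ((1 - X : ℤ[X])^m * (1 + X)^(m+1)) = (1 - X^2)^m + X * (1 - X^2)^m := by
    have hb : ((1:ℤ[X]) - X^2) = (1-X)*(1+X) := by ring
    rw [hb, mul_pow, pow_succ]
    ring
  rw [hq, coeff_add]
  rcases Nat.even_or_odd i with he | ho
  · obtain ⟨t, rfl⟩ := he
    have ht : t + t = 2*t := by omega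
    rw [ht, coeff_one_sub_X_sq_pow]
    rcases Nat.eq_zero_or_pos t with rfl | h0
    · norm_num [mul_coeff_zero, coeff_X_zero]
    · obtain ⟨s, hs⟩ : ∃ s, 2*t = s + 1 := ⟨2*t-1, by omega⟩
      rw [hs, coeff_X_mul, coeff_one_sub_X_sq_pow]
      have h1 : ¬ (2 ∣ s) := by omega
      have h2 : (2 ∣ s + 1) := by omega
      have h3 : (s+1)/2 = t := by omega
      simp [h1, h2, h3]
  · obtain ⟨t, rfl⟩ := ho
    rw [coeff_X_mul, coeff_one_sub_X_sq_pow, coeff_one_sub_X_sq_pow]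
    have h1 : ¬ (2 ∣ 2*t+1) := by omega
    have h2 : (2*t+1)/2 = t := by omega
    have h3 : (2*t)/2 = t := by omega
    have h4 : 2 ∣ 2*t := by omega
    simp [h1, h2, h3, h4]

lemma sum_half (f : ℕ → ℤ) (N : ℕ) :
    ∑ i ∈ Finset.range (2*N), f (i/2) = ∑ t ∈ Finset.range N, 2 * f t := by
  induction N with
  | zero => simp
  | succ N ih =>
    have h : 2*(N+1) = (2*N + 1) + 1 := by omega
    rw [h, Finset.sum_range_succ, Finset.sum_range_succ, ih, Finset.sum_range_succ]
    have h1 : (2*N)/2 = N := by omega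
    have h2 : (2*N+1)/2 = N := by omega
    rw [h1, h2]
    ring

theorem stmt11 (n : ℕ) (hn : Odd n) :
    ∑ i ∈ Finset.range (n + 1), |K i ((n - 1) / 2) n| = 2 ^ ((n + 1) / 2) := by
  obtain ⟨m, rfl⟩ := hn
  have h1 : (2*m+1-1)/2 = m := by omega
  have h2 : (2*m+1+1)/2 = m+1 := by omega
  rw [h1, h2]
  have h3 : ∀ i, |K i m (2*m+1)| = (m.choose (i/2) : ℤ) := by
    intro i
    rw [K_val, abs_mul, abs_pow, abs_neg, abs_one, one_pow, one_mul, Int.abs_natCast]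
  simp_rw [h3]
  have h4 : 2*m+1+1 = 2*(m+1) := by omega
  rw [h4, sum_half (fun t => (m.choose t : ℤ)) (m+1), ← Finset.mul_sum]
  have h5 : ∑ t ∈ Finset.range (m+1), (m.choose t : ℤ) = 2^m := by
    have := Nat.sum_range_choose m
    exact_mod_cast congrArg (Nat.cast : ℕ → ℤ) this
  rw [h5]
  ring
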